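/- Support splitting closure lemma: Let (F₁,F₂,S₃) be a support splitting of BSAF F, and F₂^{E₁} the S-reduct of F₂ w.r.t. E₁. (1) If E₁ ∈ adm(F₁) and E₂ ∈ adm(F₂^{E₁}), then E = E₁ ∪ (E₂ \ {*₂}) is closed in F. (2) If E ∈ adm(F), then E ∩ A₁ is closed in F₁ and E ∩ A₂ is closed in F₂^{E₁}. -/

import Mathlib

variable {α : Type*}

/-- A bipolar set-argumentation framework: arguments `A`, collective attacks `R`,
collective supports `S`. -/
structure BSAF (α : Type*) where
  A : Set α
  R : Set (Set α × α)
  S : Set (Set α × α)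

namespace BSAF

/-- Membership in the least superset of `E` that is closed under the supports of `F`. -/
inductive InCl (F : BSAF α) (E : Set α) : α → Prop
  | base {a : α} : a ∈ E → InCl F E a
  | step {T : Set α} {h : α} : (T, h) ∈ F.S → (∀ t ∈ T, InCl F E t) → InCl F E h

/-- The closure of `E` under the supports of `F`. -/
def cl (F : BSAF α) (E : Set α) : Set α := {a | F.InCl E a}

/-- `E` is closed if its closure equals itself. -/
def Closed (F : BSAF α) (E : Set α) : Prop := F.cl E = E

/-- `E` attacks the set `D`. -/
def Attacks (F : BSAF α) (E D : Set α) : Prop :=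
  ∃ T h, (T, h) ∈ F.R ∧ T ⊆ E ∧ h ∈ D

/-- `E` is conflict-free: it does not attack itself. -/
def ConflictFree (F : BSAF α) (E : Set α) : Prop :=
  ¬ ∃ T h, (T, h) ∈ F.R ∧ T ⊆ E ∧ h ∈ E

/-- `E` defends `a`: every closed attacker of `a` is attacked by `E`. -/
def Defends (F : BSAF α) (E : Set α) (a : α) : Prop :=
  ∀ D : Set α, D ⊆ F.A → F.Closed D → (∃ T, (T, a) ∈ F.R ∧ T ⊆ D) → F.Attacks E D

/-- `E` is admissible: conflict-free, closed, and defends each of its members. -/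
def Admissible (F : BSAF α) (E : Set α) : Prop :=
  E ⊆ F.A ∧ F.ConflictFree E ∧ F.Closed E ∧ ∀ a ∈ E, F.Defends E a

/-- `E` is complete: admissible and contains every argument it defends. -/
def Complete (F : BSAF α) (E : Set α) : Prop :=
  F.Admissible E ∧ ∀ a ∈ F.A, F.Defends E a → a ∈ E

/-- Grounded: ⊆-minimal complete. -/
def Grounded (F : BSAF α) (E : Set α) : Prop :=
  F.Complete E ∧ ∀ E', F.Complete E' → E' ⊆ E → E' = E

/-- Preferred: ⊆-maximal admissible. -/
def Preferred (F : BSAF α) (E : Set α) : Prop :=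
  F.Admissible E ∧ ∀ E', F.Admissible E' → E ⊆ E' → E' = E

/-- Stable: admissible and attacks every outside argument. -/
def Stable (F : BSAF α) (E : Set α) : Prop :=
  F.Admissible E ∧ ∀ x ∈ F.A \ E, ∃ T, (T, x) ∈ F.R ∧ T ⊆ E

end BSAF
namespace BSAF

/-- All links of `G` stay within its argument set. -/
def WithinA (G : BSAF α) : Prop :=
  (∀ p ∈ G.R, p.1 ⊆ G.A ∧ p.2 ∈ G.A) ∧ (∀ p ∈ G.S, p.1 ⊆ G.A ∧ p.2 ∈ G.A)

/-- `(F₁, F₂, R₃)` is an attack splitting of `F`. -/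
def IsAttackSplitting (F F₁ F₂ : BSAF α) (R₃ : Set (Set α × α)) : Prop :=
  F₁.WithinA ∧ F₂.WithinA ∧
  F₁.A ∩ F₂.A = ∅ ∧ F.A = F₁.A ∪ F₂.A ∧
  F.S = F₁.S ∪ F₂.S ∧
  F.R = F₁.R ∪ F₂.R ∪ R₃ ∧
  ∀ p ∈ R₃, (p.1 ∩ F₁.A).Nonempty ∧ p.1 ⊆ F.A ∧ p.2 ∈ F₂.A

/-- The closed negative links `R₃ᶜ = {(cl(T), h) | (T, h) ∈ R₃}`. -/
def closedLinks (F : BSAF α) (R₃ : Set (Set α × α)) : Set (Set α × α) :=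
  {p | ∃ T h, (T, h) ∈ R₃ ∧ p = (F.cl T, h)}

/-- The arguments attacked by `E` via the attack relation `Rs`. -/
def attackedBy (Rs : Set (Set α × α)) (E : Set α) : Set α :=
  {a | ∃ T, (T, a) ∈ Rs ∧ T ⊆ E}

/-- The `(E₁, R₃ᶜ)`-reduct of `F₂`. -/
def Rreduct (F F₁ F₂ : BSAF α) (R₃ : Set (Set α × α)) (E₁ : Set α) : BSAF α where
  A := F₂.A
  R := F₂.R ∪ {p | ∃ T h, (T, h) ∈ F.closedLinks R₃ ∧
        T ∩ attackedBy (F₁.R ∪ F.closedLinks R₃) E₁ = ∅ ∧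
        T ∩ F₁.A ⊆ E₁ ∧ p = (T ∩ F₂.A, h)}
  S := F₂.S

/-- The undecided links in `R₃ᶜ` w.r.t. `E₁`. -/
def undecidedLinks (F F₁ : BSAF α) (R₃ : Set (Set α × α)) (E₁ : Set α) : Set (Set α × α) :=
  {p | p ∈ F.closedLinks R₃ ∧
    p.1 ∩ attackedBy (F₁.R ∪ F.closedLinks R₃) E₁ = ∅ ∧ ¬ p.1 ∩ F₁.A ⊆ E₁}

/-- The modification `F₂* = mod^{E₁}_{R₃ᶜ}(F₂^{E₁})`, with fresh self-attacker `s₀`. -/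
def modification (F F₁ F₂ : BSAF α) (R₃ : Set (Set α × α)) (E₁ : Set α) (s₀ : α) : BSAF α where
  A := F₂.A ∪ {s₀}
  R := (F.Rreduct F₁ F₂ R₃ E₁).R ∪ {({s₀}, s₀)} ∪
       {p | ∃ T h, (T, h) ∈ F.undecidedLinks F₁ R₃ E₁ ∧ p = ((T ∩ F₂.A) ∪ {s₀}, h)}
  S := F₂.S

end BSAF
namespace BSAF

/-- `(F₁, F₂, S₃)` is a support splitting of `F`. -/
def IsSupportSplitting (F F₁ F₂ : BSAF α) (S₃ : Set (Set α × α)) : Prop :=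
  F₁.WithinA ∧ F₂.WithinA ∧
  F₁.A ∩ F₂.A = ∅ ∧ F.A = F₁.A ∪ F₂.A ∧
  F.R = F₁.R ∪ F₂.R ∧
  F.S = F₁.S ∪ F₂.S ∪ S₃ ∧
  ∀ p ∈ S₃, (p.1 ∩ F₂.A).Nonempty ∧ p.1 ⊆ F.A ∧ p.2 ∈ F₁.A

/-- Support-incompatible sets `𝒯_{S₃}(E₁)`. -/
def suppIncompatible (F₁ : BSAF α) (S₃ : Set (Set α × α)) (E₁ : Set α) : Set (Set α) :=
  {T | ∃ h ∈ F₁.A, (T, h) ∈ S₃ ∧ T ∩ F₁.A ⊆ E₁ ∧ h ∉ E₁}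

/-- Closure-defeated sets `𝒟_{S₃}(E₁)`. -/
def closureDefeated (F F₁ : BSAF α) (S₃ : Set (Set α × α)) (E₁ : Set α) : Set (Set α) :=
  {T | T ∈ suppIncompatible F₁ S₃ E₁ ∧ T ∩ F₁.A = ∅ ∧
    (F.cl T ∩ attackedBy F.R E₁).Nonempty}

/-- Componentwise union of two BSAFs. -/
def bunion (G H : BSAF α) : BSAF α := ⟨G.A ∪ H.A, G.R ∪ H.R, G.S ∪ H.S⟩

open Classical in
/-- Type-1-modification of `F₂` with fresh argument `s₁`. -/
noncomputable def type1Mod (F F₁ F₂ : BSAF α) (S₃ : Set (Set α × α)) (E₁ : Set α)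
    (s₁ : α) : BSAF α :=
  if F.closureDefeated F₁ S₃ E₁ = ∅ then F₂ else
    ⟨F₂.A ∪ {s₁}, F₂.R ∪ {((∅ : Set α), s₁)},
      F₂.S ∪ {p | ∃ T ∈ F.closureDefeated F₁ S₃ E₁, p = (T ∩ F₂.A, s₁)}⟩

open Classical in
/-- Type-2-modification of `F₂` with fresh argument `s₂`. -/
noncomputable def type2Mod (F F₁ F₂ : BSAF α) (S₃ : Set (Set α × α)) (E₁ : Set α)
    (s₂ : α) : BSAF α :=
  if suppIncompatible F₁ S₃ E₁ \ F.closureDefeated F₁ S₃ E₁ = ∅ then F₂ else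
    ⟨F₂.A ∪ {s₂},
      F₂.R ∪ {p | ∃ T ∈ suppIncompatible F₁ S₃ E₁ \ F.closureDefeated F₁ S₃ E₁,
        p = ((T ∩ F₂.A) ∪ {s₂}, s₂)},
      F₂.S ∪ {p | ∃ T ∈ suppIncompatible F₁ S₃ E₁ \ F.closureDefeated F₁ S₃ E₁,
        p = (T ∩ F₂.A, s₂)}⟩

/-- The `(E₁, S₃)`-reduct (S-reduct) of `F₂`: union of type-1 and type-2 modifications. -/
noncomputable def Sreduct (F F₁ F₂ : BSAF α) (S₃ : Set (Set α × α)) (E₁ : Set α)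
    (s₁ s₂ : α) : BSAF α :=
  bunion (F.type1Mod F₁ F₂ S₃ E₁ s₁) (F.type2Mod F₁ F₂ S₃ E₁ s₂)

end BSAF

namespace BSAF

lemma closed_iff (G : BSAF α) (E : Set α) :
    G.Closed E ↔ ∀ T h, (T, h) ∈ G.S → T ⊆ E → h ∈ E := by
  constructor
  · intro hc T h hTh hTE
    have : G.InCl E h := .step hTh (fun t ht => .base (hTE ht))
    rw [show E = G.cl E from hc.symm]
    exact this
  · intro hstep
    apply Set.Subset.antisymm
    · intro a ha
      induction ha with
      | base hb => exact hb
      | step hTh _ ih => exact hstep _ _ hTh ih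
    · intro a ha; exact .base ha

lemma cl_mono (G : BSAF α) {E D : Set α} (h : E ⊆ D) : G.cl E ⊆ G.cl D := by
  intro a ha
  induction ha with
  | base hb => exact .base (h hb)
  | step hTh _ ih => exact InCl.step hTh ih

lemma Sreduct_A_sub (F F₁ F₂ : BSAF α) (S₃ : Set (Set α × α)) (E₁ : Set α) (s₁ s₂ : α) :
    (F.Sreduct F₁ F₂ S₃ E₁ s₁ s₂).A ⊆ F₂.A ∪ {s₁, s₂} := by
  unfold Sreduct bunion type1Mod type2Mod
  split_ifs <;> intro a ha <;> simp at ha ⊢ <;> tauto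

lemma S₂_sub_Sreduct (F F₁ F₂ : BSAF α) (S₃ : Set (Set α × α)) (E₁ : Set α) (s₁ s₂ : α) :
    F₂.S ⊆ (F.Sreduct F₁ F₂ S₃ E₁ s₁ s₂).S := by
  unfold Sreduct bunion type1Mod type2Mod
  split_ifs <;> intro p hp <;> simp <;> tauto

lemma Sreduct_S_cases (F F₁ F₂ : BSAF α) (S₃ : Set (Set α × α)) (E₁ : Set α) (s₁ s₂ : α)
    {p : Set α × α} (hp : p ∈ (F.Sreduct F₁ F₂ S₃ E₁ s₁ s₂).S) :
    p ∈ F₂.S ∨ (∃ T ∈ F.closureDefeated F₁ S₃ E₁, p = (T ∩ F₂.A, s₁)) ∨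
      (∃ T ∈ suppIncompatible F₁ S₃ E₁ \ F.closureDefeated F₁ S₃ E₁, p = (T ∩ F₂.A, s₂)) := by
  unfold Sreduct bunion type1Mod type2Mod at hp
  split_ifs at hp with h1 h2
  · exact Or.inl (hp.elim id id)
  · rcases hp with hp | hp | hp
    · exact Or.inl hp
    · exact Or.inl hp
    · exact Or.inr (Or.inr hp)
  · rcases hp with (hp | hp) | hp
    · exact Or.inl hp
    · exact Or.inr (Or.inl hp)
    · exact Or.inl hp
  · rcases hp with (hp | hp) | hp | hp
    · exact Or.inl hp
    · exact Or.inr (Or.inl hp)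
    · exact Or.inl hp
    · exact Or.inr (Or.inr hp)

lemma mem_D_support (F F₁ F₂ : BSAF α) (S₃ : Set (Set α × α)) (E₁ : Set α) (s₁ s₂ : α)
    {T : Set α} (hT : T ∈ F.closureDefeated F₁ S₃ E₁) :
    (T ∩ F₂.A, s₁) ∈ (F.Sreduct F₁ F₂ S₃ E₁ s₁ s₂).S := by
  have hne : F.closureDefeated F₁ S₃ E₁ ≠ ∅ := Set.nonempty_iff_ne_empty.1 ⟨T, hT⟩
  unfold Sreduct bunion type1Mod
  rw [if_neg hne]
  left; right
  exact ⟨T, hT, rfl⟩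

lemma mem_D_attack (F F₁ F₂ : BSAF α) (S₃ : Set (Set α × α)) (E₁ : Set α) (s₁ s₂ : α)
    {T : Set α} (hT : T ∈ F.closureDefeated F₁ S₃ E₁) :
    ((∅ : Set α), s₁) ∈ (F.Sreduct F₁ F₂ S₃ E₁ s₁ s₂).R := by
  have hne : F.closureDefeated F₁ S₃ E₁ ≠ ∅ := Set.nonempty_iff_ne_empty.1 ⟨T, hT⟩
  unfold Sreduct bunion type1Mod
  rw [if_neg hne]
  left; right
  rfl

lemma mem_TD_support (F F₁ F₂ : BSAF α) (S₃ : Set (Set α × α)) (E₁ : Set α) (s₁ s₂ : α)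
    {T : Set α} (hT : T ∈ suppIncompatible F₁ S₃ E₁ \ F.closureDefeated F₁ S₃ E₁) :
    (T ∩ F₂.A, s₂) ∈ (F.Sreduct F₁ F₂ S₃ E₁ s₁ s₂).S := by
  have hne : suppIncompatible F₁ S₃ E₁ \ F.closureDefeated F₁ S₃ E₁ ≠ ∅ :=
    Set.nonempty_iff_ne_empty.1 ⟨T, hT⟩
  unfold Sreduct bunion type2Mod
  rw [if_neg hne]
  right; right
  exact ⟨T, hT, rfl⟩

lemma mem_TD_attack (F F₁ F₂ : BSAF α) (S₃ : Set (Set α × α)) (E₁ : Set α) (s₁ s₂ : α)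
    {T : Set α} (hT : T ∈ suppIncompatible F₁ S₃ E₁ \ F.closureDefeated F₁ S₃ E₁) :
    ((T ∩ F₂.A) ∪ {s₂}, s₂) ∈ (F.Sreduct F₁ F₂ S₃ E₁ s₁ s₂).R := by
  have hne : suppIncompatible F₁ S₃ E₁ \ F.closureDefeated F₁ S₃ E₁ ≠ ∅ :=
    Set.nonempty_iff_ne_empty.1 ⟨T, hT⟩
  unfold Sreduct bunion type2Mod
  rw [if_neg hne]
  right; right
  exact ⟨T, hT, rfl⟩

end BSAF

/-- Closure lemma for support splittings. -/
theorem BSAF.supportSplitting_closure (F F₁ F₂ : BSAF α) (S₃ : Set (Set α × α))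
    (hsplit : F.IsSupportSplitting F₁ F₂ S₃) (hfin : F.A.Finite)
    (s₁ s₂ : α) (hs₁ : s₁ ∉ F.A) (hs₂ : s₂ ∉ F.A) (hne : s₁ ≠ s₂) :
    (∀ E₁ E₂ : Set α, F₁.Admissible E₁ →
      (F.Sreduct F₁ F₂ S₃ E₁ s₁ s₂).Admissible E₂ →
      F.Closed (E₁ ∪ (E₂ \ {s₂}))) ∧
    (∀ E : Set α, F.Admissible E →
      F₁.Closed (E ∩ F₁.A) ∧
      (F.Sreduct F₁ F₂ S₃ (E ∩ F₁.A) s₁ s₂).Closed (E ∩ F₂.A)) := by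
  obtain ⟨hW₁, hW₂, hdisj, hA, hR, hS, hS₃⟩ := hsplit
  have hA1sub : F₁.A ⊆ F.A := hA ▸ Set.subset_union_left
  have hA2sub : F₂.A ⊆ F.A := hA ▸ Set.subset_union_right
  have hnot12 : ∀ a, a ∈ F₁.A → a ∈ F₂.A → False := by
    intro a h1 h2
    have : a ∈ F₁.A ∩ F₂.A := ⟨h1, h2⟩
    rw [hdisj] at this; exact this
  constructor
  · -- Part 1
    intro E₁ E₂ hadm₁ hadm₂
    obtain ⟨hE₁A, hcf₁, hcl₁, _⟩ := hadm₁
    obtain ⟨hE₂A, hcf₂, hcl₂, _⟩ := hadm₂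
    have hE₂A' : E₂ ⊆ F₂.A ∪ {s₁, s₂} :=
      fun a ha => Sreduct_A_sub F F₁ F₂ S₃ E₁ s₁ s₂ (hE₂A ha)
    -- elements of E in F₁.A are in E₁
    have hEA1 : ∀ a ∈ E₁ ∪ (E₂ \ {s₂}), a ∈ F₁.A → a ∈ E₁ := by
      intro a ha haA
      rcases ha with h | h
      · exact h
      · rcases hE₂A' h.1 with h2 | h2
        · exact absurd h2 (fun h2 => hnot12 a haA h2)
        · rcases h2 with rfl | h2
          · exact absurd (hA1sub haA) hs₁
          · rw [Set.mem_singleton_iff] at h2; subst h2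
            exact absurd (hA1sub haA) hs₂
    have hEA2 : ∀ a ∈ E₁ ∪ (E₂ \ {s₂}), a ∈ F₂.A → a ∈ E₂ := by
      intro a ha haA
      rcases ha with h | h
      · exact absurd haA (fun h2 => hnot12 a (hE₁A h) h2)
      · exact h.1
    rw [closed_iff]
    intro T h hTh hTE
    rw [hS] at hTh
    rcases hTh with (hTh | hTh) | hTh
    · -- (T,h) ∈ F₁.S
      obtain ⟨hT1, hh1⟩ := hW₁.2 _ hTh
      have hTE₁ : T ⊆ E₁ := fun t ht => hEA1 t (hTE ht) (hT1 ht)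
      exact Or.inl ((closed_iff F₁ E₁).1 hcl₁ T h hTh hTE₁)
    · -- (T,h) ∈ F₂.S
      obtain ⟨hT2, hh2⟩ := hW₂.2 _ hTh
      have hTE₂ : T ⊆ E₂ := fun t ht => hEA2 t (hTE ht) (hT2 ht)
      have hhE₂ : h ∈ E₂ :=
        (closed_iff _ E₂).1 hcl₂ T h (S₂_sub_Sreduct F F₁ F₂ S₃ E₁ s₁ s₂ hTh) hTE₂
      have : h ≠ s₂ := fun he => hs₂ (he ▸ hA2sub hh2)
      exact Or.inr ⟨hhE₂, this⟩
    · -- (T,h) ∈ S₃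
      obtain ⟨hTne, hTA, hhA⟩ := hS₃ _ hTh
      by_cases hh : h ∈ E₁
      · exact Or.inl hh
      exfalso
      have hT𝒯 : T ∈ suppIncompatible F₁ S₃ E₁ :=
        ⟨h, hhA, hTh, fun t ht => hEA1 t (hTE ht.1) ht.2, hh⟩
      have hTE₂ : T ∩ F₂.A ⊆ E₂ := fun t ht => hEA2 t (hTE ht.1) ht.2
      by_cases hD : T ∈ F.closureDefeated F₁ S₃ E₁
      · have hs₁E : s₁ ∈ E₂ :=
          (closed_iff _ E₂).1 hcl₂ _ _ (mem_D_support F F₁ F₂ S₃ E₁ s₁ s₂ hD) hTE₂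
        exact hcf₂ ⟨∅, s₁, mem_D_attack F F₁ F₂ S₃ E₁ s₁ s₂ hD, Set.empty_subset _, hs₁E⟩
      · have hTD : T ∈ suppIncompatible F₁ S₃ E₁ \ F.closureDefeated F₁ S₃ E₁ := ⟨hT𝒯, hD⟩
        have hs₂E : s₂ ∈ E₂ :=
          (closed_iff _ E₂).1 hcl₂ _ _ (mem_TD_support F F₁ F₂ S₃ E₁ s₁ s₂ hTD) hTE₂
        refine hcf₂ ⟨(T ∩ F₂.A) ∪ {s₂}, s₂, mem_TD_attack F F₁ F₂ S₃ E₁ s₁ s₂ hTD, ?_, hs₂E⟩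
        exact Set.union_subset hTE₂ (Set.singleton_subset_iff.2 hs₂E)
  · -- Part 2
    intro E hadm
    obtain ⟨hEA, hcf, hcl, _⟩ := hadm
    have hclE := (closed_iff F E).1 hcl
    constructor
    · rw [closed_iff]
      intro T h hTh hTE
      obtain ⟨_, hh1⟩ := hW₁.2 _ hTh
      have : (T, h) ∈ F.S := by rw [hS]; exact Or.inl (Or.inl hTh)
      exact ⟨hclE T h this (fun t ht => (hTE ht).1), hh1⟩
    · rw [closed_iff]
      intro T h hTh hTE
      rcases Sreduct_S_cases F F₁ F₂ S₃ (E ∩ F₁.A) s₁ s₂ hTh with hc | ⟨T₀, hT₀, hp⟩ | ⟨T₀, hT₀, hp⟩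
      · obtain ⟨_, hh2⟩ := hW₂.2 _ hc
        have : (T, h) ∈ F.S := by rw [hS]; exact Or.inl (Or.inr hc)
        exact ⟨hclE T h this (fun t ht => (hTE ht).1), hh2⟩
      · exfalso
        obtain ⟨hTeq, hheq⟩ := Prod.mk.injEq _ _ _ _ ▸ hp
        obtain ⟨⟨h', hh'A, hTh', hT1, hh'⟩, hT1e, a, hacl, U, hUa, hUE⟩ := hT₀
        have hT₀A : T₀ ⊆ F.A := (hS₃ _ hTh').2.1
        have hT₀E : T₀ ⊆ E := by
          intro t ht
          have : t ∈ F₁.A ∪ F₂.A := hA ▸ hT₀A ht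
          rcases this with h1 | h2
          · exact absurd (show t ∈ (∅ : Set α) by rw [← hT1e]; exact ⟨ht, h1⟩) (Set.notMem_empty t)
          · exact (hTE (hTeq ▸ (⟨ht, h2⟩ : t ∈ T₀ ∩ F₂.A))).1
        have haE : a ∈ E := by
          have : F.cl T₀ ⊆ E := by
            rw [show E = F.cl E from hcl.symm]; exact cl_mono F hT₀E
          exact this hacl
        exact hcf ⟨U, a, hUa, fun u hu => (hUE hu).1, haE⟩
      · exfalso
        obtain ⟨hTeq, hheq⟩ := Prod.mk.injEq _ _ _ _ ▸ hp
        obtain ⟨⟨h', hh'A, hTh', hT1, hh'⟩, _⟩ := hT₀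
        have hT₀A : T₀ ⊆ F.A := (hS₃ _ hTh').2.1
        have hT₀E : T₀ ⊆ E := by
          intro t ht
          have : t ∈ F₁.A ∪ F₂.A := hA ▸ hT₀A ht
          rcases this with h1 | h2
          · exact (hT1 ⟨ht, h1⟩).1
          · exact (hTE (hTeq ▸ (⟨ht, h2⟩ : t ∈ T₀ ∩ F₂.A))).1
        have : (T₀, h') ∈ F.S := by rw [hS]; exact Or.inr hTh'
        exact hh' ⟨hclE T₀ h' this hT₀E, hh'A⟩
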